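/- (Risk rewriting identity, discrete form.) Let k ≥ 2, 1 ≤ m ≤ k-1, p a pmf on Y = {1,...,k}, and ℓ : Y → ℝ any function (the loss of a fixed predictor at a fixed instance). Define the subset-average loss ℓ̄(L) := (1/m) Σ_{j ∈ L} ℓ(j), and let q1, q0 be the response-conditioned laws q1(L) = (1/C(k-1,m-1)) Σ_{j∈L} p(j), q0(L) = (1/C(k-1,m)) Σ_{j∉L} p(j) on Q_m. Then Σ_y p(y) ℓ(y) = m · Σ_{L∈Q_m} q1(L) ℓ̄(L) − (m-1) · Σ_{L∈Q_m} q0(L) ℓ̄(L). -/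

import Mathlib

open Finset

lemma card_filter_superset {α : Type*} [DecidableEq α] (t s : Finset α) (m : ℕ)
    (hst : s ⊆ t) (hsm : s.card ≤ m) :
    ((t.powersetCard m).filter (fun L => s ⊆ L)).card =
      Nat.choose (t.card - s.card) (m - s.card) := by
  rw [← Finset.card_sdiff_of_subset hst, ← Finset.card_powersetCard]
  apply Finset.card_bij' (fun L _ => L \ s) (fun T _ => T ∪ s)
  · intro L hL
    simp only [mem_filter, mem_powersetCard] at hL
    simp only [mem_powersetCard]
    exact ⟨sdiff_subset_sdiff hL.1.1 le_rfl, by rw [card_sdiff_of_subset hL.2, hL.1.2]⟩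
  · intro T hT
    simp only [mem_powersetCard] at hT
    have hdisj : Disjoint T s := disjoint_of_subset_left hT.1 sdiff_disjoint
    simp only [mem_filter, mem_powersetCard]
    refine ⟨⟨union_subset (hT.1.trans sdiff_subset) hst, ?_⟩, subset_union_right⟩
    rw [card_union_of_disjoint hdisj, hT.2, Nat.sub_add_cancel hsm]
  · intro L hL
    simp only [mem_filter] at hL
    exact sdiff_union_of_subset hL.2
  · intro T hT
    simp only [mem_powersetCard] at hT
    exact union_sdiff_cancel_right (disjoint_of_subset_left hT.1 sdiff_disjoint)

lemma key_nat (k m : ℕ) (hk : 2 ≤ k) (hm1 : 1 ≤ m) (hm2 : m ≤ k - 1) :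
    m * Nat.choose (k-1) m * (if 2 ≤ m then Nat.choose (k-2) (m-2) else 0)
      = (m-1) * Nat.choose (k-1) (m-1) * Nat.choose (k-2) (m-1) := by
  rcases Nat.lt_or_ge m 2 with h | h
  · interval_cases m
    simp
  · rw [if_pos h]
    obtain ⟨r, rfl⟩ : ∃ r, m = r + 2 := ⟨m - 2, by omega⟩
    obtain ⟨n, rfl⟩ : ∃ n, k = n + 2 := ⟨k - 2, by omega⟩
    simp only [Nat.add_sub_cancel, show n + 2 - 1 = n + 1 by omega,
      show r + 2 - 1 = r + 1 by omega]
    have h1 := Nat.add_one_mul_choose_eq n (r+1)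
    have h2 := Nat.add_one_mul_choose_eq n r
    nlinarith [h1, h2]

/-- Risk rewriting identity (discrete, single-instance form): the supervised risk
equals `m` times the `s=1`-conditioned expected subset-average loss minus `m-1`
times the `s=0`-conditioned expected subset-average loss. -/
theorem risk_rewriting_identity (k m : ℕ) (hk : 2 ≤ k) (hm1 : 1 ≤ m)
    (hm2 : m ≤ k - 1) (p : Fin k → ℝ) (hp : ∀ y, 0 ≤ p y) (hsum : ∑ y, p y = 1)
    (ℓ : Fin k → ℝ) :
    ∑ y, p y * ℓ y =
      (m : ℝ) * ∑ L ∈ (Finset.univ : Finset (Fin k)).powersetCard m,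
          ((1 / (Nat.choose (k - 1) (m - 1) : ℝ)) * ∑ j ∈ L, p j) *
            ((1 / (m : ℝ)) * ∑ j ∈ L, ℓ j)
      - ((m : ℝ) - 1) * ∑ L ∈ (Finset.univ : Finset (Fin k)).powersetCard m,
          ((1 / (Nat.choose (k - 1) m : ℝ)) * ∑ j ∈ Lᶜ, p j) *
            ((1 / (m : ℝ)) * ∑ j ∈ L, ℓ j) := by
  set P := (Finset.univ : Finset (Fin k)).powersetCard m with hP
  set C1 : ℝ := (Nat.choose (k - 1) (m - 1) : ℝ) with hC1def
  set C0 : ℝ := (Nat.choose (k - 1) m : ℝ) with hC0def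
  set n2 : ℕ := if 2 ≤ m then Nat.choose (k-2) (m-2) else 0 with hn2def
  set N0 : ℝ := (Nat.choose (k-2) (m-1) : ℝ) with hN0def
  set D : ℝ := ∑ i, p i * ℓ i with hDdef
  set T : ℝ := ∑ i, ℓ i with hTdef
  have hswap : ∀ (S : Finset (Fin k) → Finset (Fin k)) (f g : Fin k → ℝ),
      ∑ L ∈ P, (∑ j ∈ S L, f j) * (∑ i ∈ L, g i)
        = ∑ j, ∑ i, f j * g i * ((P.filter fun L => j ∈ S L ∧ i ∈ L).card : ℝ) := by
    intro S f g
    have h1 : ∀ L ∈ P, (∑ j ∈ S L, f j) * (∑ i ∈ L, g i)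
        = ∑ j, ∑ i, (if j ∈ S L then f j else 0) * (if i ∈ L then g i else 0) := by
      intro L _
      rw [← Finset.sum_mul_sum]
      congr 1 <;> rw [Finset.sum_ite_mem, univ_inter]
    rw [Finset.sum_congr rfl h1, Finset.sum_comm]
    refine Finset.sum_congr rfl fun j _ => ?_
    rw [Finset.sum_comm]
    refine Finset.sum_congr rfl fun i _ => ?_
    simp only [ite_mul, zero_mul, mul_ite, mul_zero, ← ite_and]
    rw [← Finset.sum_filter, Finset.sum_const, nsmul_eq_mul]
    have : (P.filter fun a => i ∈ a ∧ j ∈ S a) = (P.filter fun L => j ∈ S L ∧ i ∈ L) := by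
      apply Finset.filter_congr; intro L _; exact and_comm
    rw [this]; ring
  have hc1 : ∀ j i : Fin k, (P.filter fun L => j ∈ id L ∧ i ∈ L).card
      = if j = i then (k-1).choose (m-1) else n2 := by
    intro j i
    by_cases hji : j = i
    · subst hji
      rw [if_pos rfl]
      have he : (P.filter fun L => j ∈ id L ∧ j ∈ L) = P.filter (fun L => ({j} : Finset (Fin k)) ⊆ L) := by
        apply Finset.filter_congr; intro L _; simp
      rw [he, hP, card_filter_superset _ _ _ (subset_univ _) (by simpa using hm1)]
      simp [Finset.card_univ]
    · rw [if_neg hji, hn2def]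
      have he : (P.filter fun L => j ∈ id L ∧ i ∈ L) = P.filter (fun L => ({j, i} : Finset (Fin k)) ⊆ L) := by
        apply Finset.filter_congr; intro L _; simp [insert_subset_iff]
      have hcard2 : ({j, i} : Finset (Fin k)).card = 2 := by
        rw [card_insert_of_notMem (by simpa using hji), card_singleton]
      by_cases h2 : 2 ≤ m
      · rw [if_pos h2, he, hP, card_filter_superset _ _ _ (subset_univ _) (by omega)]
        simp [Finset.card_univ, hcard2]
      · rw [if_neg h2, Finset.card_eq_zero, Finset.filter_eq_empty_iff]
        intro L hL
        rw [hP, mem_powersetCard] at hL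
        rintro ⟨hjL, hiL⟩
        have : ({j, i} : Finset (Fin k)) ⊆ L := by
          simp only [insert_subset_iff, singleton_subset_iff]; exact ⟨hjL, hiL⟩
        have := Finset.card_le_card this
        omega
  have hc0 : ∀ j i : Fin k, (P.filter fun L => j ∈ Lᶜ ∧ i ∈ L).card
      = if j = i then 0 else (k-2).choose (m-1) := by
    intro j i
    by_cases hji : j = i
    · subst hji
      rw [if_pos rfl, Finset.card_eq_zero, Finset.filter_eq_empty_iff]
      intro L _
      simp
    · rw [if_neg hji]
      have he : (P.filter fun L => j ∈ Lᶜ ∧ i ∈ L)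
          = ((Finset.univ.erase j).powersetCard m).filter (fun L => ({i} : Finset (Fin k)) ⊆ L) := by
        ext L
        simp only [mem_filter, hP, mem_powersetCard, mem_compl, subset_erase, singleton_subset_iff,
          subset_univ, true_and]
        tauto
      rw [he, card_filter_superset _ _ _ (by simp [Finset.mem_erase]; exact Ne.symm hji) (by simpa using hm1)]
      rw [Finset.card_erase_of_mem (mem_univ j)]
      simp only [Finset.card_univ, Fintype.card_fin, Finset.card_singleton]
      congr 1
  have hdiag : ∀ (a b : ℝ), (∑ j, ∑ i, p j * ℓ i * (if j = i then a else b))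
      = a * D + b * (T - D) := by
    intro a b
    have hsplit : ∀ j i : Fin k, p j * ℓ i * (if j = i then a else b)
        = p j * (ℓ i * b) + (if j = i then p j * ℓ i * (a - b) else 0) := by
      intro j i; split <;> ring
    simp only [hsplit, Finset.sum_add_distrib]
    rw [← Finset.sum_mul_sum]
    simp only [Finset.sum_ite_eq, mem_univ, if_true]
    rw [hsum, one_mul]
    have e1 : ∑ i : Fin k, ℓ i * b = T * b := (Finset.sum_mul _ _ _).symm
    have e2 : ∑ j : Fin k, p j * ℓ j * (a-b) = D * (a-b) := (Finset.sum_mul _ _ _).symm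
    rw [e1, e2]; ring
  have e1 : ∑ L ∈ P, ((1/C1) * ∑ j ∈ L, p j) * ((1/(m:ℝ)) * ∑ j ∈ L, ℓ j)
      = (1/C1) * (1/(m:ℝ)) * (C1 * D + (n2 : ℝ) * (T - D)) := by
    have hstep : ∀ L ∈ P, ((1/C1) * ∑ j ∈ L, p j) * ((1/(m:ℝ)) * ∑ j ∈ L, ℓ j)
        = (1/C1)*(1/(m:ℝ)) * ((∑ j ∈ id L, p j) * (∑ i ∈ L, ℓ i)) := by
      intro L _; simp only [id]; ring
    rw [Finset.sum_congr rfl hstep, ← Finset.mul_sum, hswap id p ℓ]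
    congr 1
    calc ∑ j, ∑ i, p j * ℓ i * ((P.filter fun L => j ∈ id L ∧ i ∈ L).card : ℝ)
        = ∑ j, ∑ i, p j * ℓ i * (if j = i then C1 else (n2:ℝ)) := by
          refine Finset.sum_congr rfl fun j _ => Finset.sum_congr rfl fun i _ => ?_
          rw [hc1 j i, apply_ite (fun n : ℕ => (n : ℝ))]
      _ = C1 * D + (n2:ℝ) * (T - D) := hdiag C1 (n2:ℝ)
  have e0 : ∑ L ∈ P, ((1/C0) * ∑ j ∈ Lᶜ, p j) * ((1/(m:ℝ)) * ∑ j ∈ L, ℓ j)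
      = (1/C0) * (1/(m:ℝ)) * (N0 * (T - D)) := by
    have hstep : ∀ L ∈ P, ((1/C0) * ∑ j ∈ Lᶜ, p j) * ((1/(m:ℝ)) * ∑ j ∈ L, ℓ j)
        = (1/C0)*(1/(m:ℝ)) * ((∑ j ∈ Lᶜ, p j) * (∑ i ∈ L, ℓ i)) := by
      intro L _; ring
    rw [Finset.sum_congr rfl hstep, ← Finset.mul_sum, hswap compl p ℓ]
    congr 1
    calc ∑ j, ∑ i, p j * ℓ i * ((P.filter fun L => j ∈ Lᶜ ∧ i ∈ L).card : ℝ)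
        = ∑ j, ∑ i, p j * ℓ i * (if j = i then (0:ℝ) else N0) := by
          refine Finset.sum_congr rfl fun j _ => Finset.sum_congr rfl fun i _ => ?_
          rw [hc0 j i, apply_ite (fun n : ℕ => (n : ℝ))]
          norm_num
          rfl
      _ = 0 * D + N0 * (T - D) := hdiag 0 N0
      _ = N0 * (T - D) := by ring
  rw [e1, e0]
  have hC1 : C1 ≠ 0 := by
    rw [hC1def]
    exact_mod_cast (Nat.choose_pos (by omega)).ne'
  have hC0 : C0 ≠ 0 := by
    rw [hC0def]
    exact_mod_cast (Nat.choose_pos hm2).ne'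
  have hm0 : (m:ℝ) ≠ 0 := by positivity
  have hkey : (m:ℝ) * C0 * (n2:ℝ) = ((m:ℝ) - 1) * C1 * N0 := by
    have h := key_nat k m hk hm1 hm2
    have h' := congrArg (fun n : ℕ => (n : ℝ)) h
    rw [hC0def, hC1def, hN0def]
    push_cast [Nat.cast_sub hm1] at h' ⊢
    rw [hn2def]
    push_cast [apply_ite (fun n : ℕ => (n : ℝ))] at h' ⊢
    linarith [h']
  field_simp
  linear_combination (D - T) * hkey
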